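/- If P = {p₁, p₂, p₃} on the sphere S² with μ(p₁) = (λ₁, λ₂) a partition of d into two parts, μ(p₂) = (d), and μ(p₃) = (2, 1, …, 1), then H^d_{S²}(P, μ) = 1/|Aut(μ(p₁))|, where |Aut(μ(p₁))| = 2 if λ₁ = λ₂ and 1 otherwise. -/

import Mathlib

open Equiv

/-- The full cycle type of a permutation of `Fin d`: its cycle type together with
a part `1` for each fixed point. This is the ramification profile (a partition of `d`). -/
def fullCycleType {d : ℕ} (σ : Perm (Fin d)) : Multiset ℕ :=
  σ.cycleType + Multiset.replicate (d - σ.cycleType.sum) 1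

/-- The number of cycles (including fixed points) of a permutation, i.e. the length of
its full cycle type. -/
def cycleCount {d : ℕ} (σ : Perm (Fin d)) : ℕ := (fullCycleType σ).card

/-- The order of the automorphism group of a partition: permutations of the parts
preserving part sizes. -/
def autPartition (μ : Multiset ℕ) : ℕ := μ.toFinset.prod fun i => (μ.count i).factorial

/-- A tuple of permutations generates a transitive subgroup. -/
def IsTransitiveTuple {d n : ℕ} (σ : Fin n → Perm (Fin d)) : Prop :=
  ∀ x y : Fin d, ∃ g ∈ Subgroup.closure (Set.range σ), g x = y

/-- The Hurwitz number of the sphere with `n` branch points and ramification profiles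
`μ i`, defined via monodromy: the number of tuples of permutations with the given
cycle types, product the identity, generating a transitive subgroup, divided by `d!`. -/
noncomputable def sphereHurwitz (d n : ℕ) (μ : Fin n → Multiset ℕ) : ℚ :=
  (Nat.card {σ : Fin n → Perm (Fin d) //
      (∀ i, fullCycleType (σ i) = μ i) ∧ (List.ofFn σ).prod = 1 ∧ IsTransitiveTuple σ} : ℚ)
    / (Nat.factorial d)

open List Equiv.Perm


/-- the standard d-cycle -/
def rotd (d : ℕ) : Perm (Fin d) := (List.finRange d).formPerm

theorem rotd_pow_apply {d : ℕ} (n : ℕ) (x : Fin d) :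
    (rotd d ^ n) x = ⟨(x.val + n) % d, Nat.mod_lt _ x.pos⟩ := by
  have h := List.formPerm_pow_apply_getElem (List.finRange d) (List.nodup_finRange d) n x.val
    (by simp)
  simpa [rotd, List.getElem_finRange, Fin.cast, Fin.ext_iff] using h

theorem rotd_apply {d : ℕ} (x : Fin d) :
    rotd d x = ⟨(x.val + 1) % d, Nat.mod_lt _ x.pos⟩ := by
  have := rotd_pow_apply 1 x
  simpa using this

theorem cycleType_rotd {d : ℕ} (hd : 2 ≤ d) : (rotd d).cycleType = {d} := by
  have hn : (List.finRange d).Nodup := List.nodup_finRange d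
  have hl : 2 ≤ (List.finRange d).length := by simpa using hd
  have hc : (rotd d).IsCycle := List.isCycle_formPerm hn hl
  rw [hc.cycleType]
  congr 1
  rw [rotd, List.support_formPerm_of_nodup _ hn]
  · simp [List.toFinset_finRange]
  · intro x hx
    apply_fun List.length at hx
    simp at hx
    omega

theorem swap_mul_formPerm_append {α : Type*} [DecidableEq α] (A B : List α)
    (hA : A ≠ []) (hB : B ≠ []) (h : (A ++ B).Nodup) :
    Equiv.swap (A.head hA) (B.head hB) * (A ++ B).formPerm = A.formPerm * B.formPerm := by
  have hAn : A.Nodup := h.of_append_left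
  have hBn : B.Nodup := h.of_append_right
  have hdisj : A.Disjoint B := List.disjoint_of_nodup_append h
  have hk : 0 < A.length := List.length_pos_iff.mpr hA
  have hm : 0 < B.length := List.length_pos_iff.mpr hB
  have hha : A.head hA = A[0] := List.head_eq_getElem_zero hA
  have hhb : B.head hB = B[0] := List.head_eq_getElem_zero hB
  have hlen : (A ++ B).length = A.length + B.length := List.length_append
  ext x
  simp only [Perm.mul_apply]
  by_cases hxA : x ∈ A
  · obtain ⟨i, hi, rfl⟩ := List.mem_iff_getElem.mp hxA
    have hxB : A[i] ∉ B := fun hb => hdisj (List.getElem_mem hi) hb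
    rw [List.formPerm_apply_of_notMem hxB, List.formPerm_apply_getElem _ hAn i hi]
    have hgl : A[i] = (A ++ B)[i]'(by omega) := (List.getElem_append_left (by omega)).symm
    rw [hgl, List.formPerm_apply_getElem _ h i (by omega)]
    rcases Nat.lt_or_ge (i+1) A.length with hlt | hge
    · simp only [Nat.mod_eq_of_lt (show i + 1 < (A ++ B).length by omega),
        Nat.mod_eq_of_lt hlt]
      have h3 : (A ++ B)[i+1]'(by omega) = A[i+1] := List.getElem_append_left (by omega)
      rw [h3]
      apply Equiv.swap_apply_of_ne_of_ne
      · rw [hha]; exact fun e => by have := hAn.getElem_inj_iff.mp e; omega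
      · rw [hhb]; exact fun e => hdisj (List.getElem_mem hlt) (e ▸ List.getElem_mem hm)
    · have hik : i + 1 = A.length := by omega
      simp only [hik, Nat.mod_self,
        Nat.mod_eq_of_lt (show A.length < (A ++ B).length by omega)]
      have h3 : (A ++ B)[A.length]'(by omega) = B[0] := by
        rw [List.getElem_append_right (le_refl _)]; simp
      rw [h3, ← hhb, ← hha, Equiv.swap_apply_right]
  · by_cases hxB : x ∈ B
    · obtain ⟨j, hj, rfl⟩ := List.mem_iff_getElem.mp hxB
      rw [List.formPerm_apply_getElem _ hBn j hj]
      have hgl : B[j] = (A ++ B)[A.length + j]'(by omega) := by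
        rw [List.getElem_append_right (by omega)]; simp
      rw [hgl, List.formPerm_apply_getElem _ h _ (by omega)]
      rcases Nat.lt_or_ge (j+1) B.length with hlt | hge
      · simp only [Nat.mod_eq_of_lt (show A.length + j + 1 < (A ++ B).length by omega),
          Nat.mod_eq_of_lt hlt]
        have h3 : (A ++ B)[A.length + j + 1]'(by omega) = B[j+1] := by
          rw [List.getElem_append_right (by omega)]; congr 1; omega
        rw [h3]
        have h4 : B[j+1] ∉ A := fun ha => hdisj ha (List.getElem_mem hlt)
        rw [List.formPerm_apply_of_notMem h4]
        apply Equiv.swap_apply_of_ne_of_ne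
        · rw [hha]; exact fun e => h4 (e ▸ List.getElem_mem hk)
        · rw [hhb]; exact fun e => by have := hBn.getElem_inj_iff.mp e; omega
      · have hjm : j + 1 = B.length := by omega
        simp only [show A.length + j + 1 = (A ++ B).length by omega, Nat.mod_self, hjm]
        have h3 : (A ++ B)[0]'(by omega) = A[0] := List.getElem_append_left (by omega)
        have h4 : B[0] ∉ A := fun ha => hdisj ha (List.getElem_mem hm)
        rw [h3, List.formPerm_apply_of_notMem h4, ← hha, Equiv.swap_apply_left, hhb]
    · have h0 : x ∉ A ++ B := by simp [hxA, hxB]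
      rw [List.formPerm_apply_of_notMem h0, List.formPerm_apply_of_notMem hxB,
        List.formPerm_apply_of_notMem hxA]
      apply Equiv.swap_apply_of_ne_of_ne
      · exact fun e => hxA (e ▸ List.head_mem hA)
      · exact fun e => hxB (e ▸ List.head_mem hB)

theorem cycleType_formPerm' {α : Type*} [DecidableEq α] [Fintype α] {l : List α}
    (h : l.Nodup) : cycleType l.formPerm = if 2 ≤ l.length then {l.length} else 0 := by
  split_ifs with hl
  · rw [(List.isCycle_formPerm h hl).cycleType]
    congr 1
    rw [List.support_formPerm_of_nodup _ h (fun x hx => by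
      apply_fun List.length at hx; simp at hx; omega)]
    rw [List.card_toFinset, List.dedup_eq_self.mpr h]
  · rw [(List.formPerm_eq_one_iff _ h).mpr (by omega)]
    exact cycleType_one

theorem swap_mul_rotd_eq {d k : ℕ} (h1 : 1 ≤ k) (h2 : k < d) :
    Equiv.swap (⟨0, by omega⟩ : Fin d) ⟨k, h2⟩ * rotd d =
      ((List.finRange d).take k).formPerm * ((List.finRange d).drop k).formPerm := by
  have hAB : (List.finRange d).take k ++ (List.finRange d).drop k = List.finRange d :=
    List.take_append_drop _ _
  have hnd : ((List.finRange d).take k ++ (List.finRange d).drop k).Nodup := by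
    rw [hAB]; exact List.nodup_finRange d
  have hlA : ((List.finRange d).take k).length = k := by simp; omega
  have hlB : ((List.finRange d).drop k).length = d - k := by simp
  have hA : (List.finRange d).take k ≠ [] := by
    intro e; apply_fun List.length at e; simp at e; omega
  have hB : (List.finRange d).drop k ≠ [] := by
    intro e; apply_fun List.length at e; simp at e; omega
  have := swap_mul_formPerm_append _ _ hA hB hnd
  rw [show ((List.finRange d).take k).head hA = (⟨0, by omega⟩ : Fin d) by
       rw [List.head_eq_getElem_zero]; apply Fin.ext; simp,
     show ((List.finRange d).drop k).head hB = (⟨k, h2⟩ : Fin d) by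
       rw [List.head_eq_getElem_zero]; apply Fin.ext; simp,
     hAB] at this
  exact this

theorem fullCycleType_swap_mul_rotd {d k : ℕ} (h1 : 1 ≤ k) (h2 : k < d) :
    fullCycleType (Equiv.swap (⟨0, by omega⟩ : Fin d) ⟨k, h2⟩ * rotd d) = {k, d - k} := by
  rw [swap_mul_rotd_eq h1 h2]
  have hAB : (List.finRange d).take k ++ (List.finRange d).drop k = List.finRange d :=
    List.take_append_drop _ _
  have hnd : ((List.finRange d).take k ++ (List.finRange d).drop k).Nodup := by
    rw [hAB]; exact List.nodup_finRange d
  have hldisj : ((List.finRange d).take k).Disjoint ((List.finRange d).drop k) :=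
    List.disjoint_of_nodup_append hnd
  have hlA : ((List.finRange d).take k).length = k := by simp; omega
  have hlB : ((List.finRange d).drop k).length = d - k := by simp
  have hdisj : Perm.Disjoint ((List.finRange d).take k).formPerm
      ((List.finRange d).drop k).formPerm := by
    intro x
    by_cases hx : x ∈ (List.finRange d).take k
    · exact Or.inr (List.formPerm_apply_of_notMem (fun hb => hldisj hx hb))
    · exact Or.inl (List.formPerm_apply_of_notMem hx)
  rw [fullCycleType, hdisj.cycleType_mul, cycleType_formPerm' hnd.of_append_left,
    cycleType_formPerm' hnd.of_append_right, hlA, hlB]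
  rcases Nat.lt_or_ge k 2 with hk | hk <;> rcases Nat.lt_or_ge (d - k) 2 with hdk | hdk
  · -- k = 1, d - k = 1, d = 2
    have e1 : k = 1 := by omega
    have e2 : d = 2 := by omega
    subst e1; subst e2
    decide
  · have e1 : k = 1 := by omega
    subst e1
    rw [if_neg (by omega), if_pos hdk]
    simp only [Multiset.sum_singleton, zero_add]
    rw [show d - (d - 1) = 1 by omega, Multiset.replicate_one, Multiset.singleton_add]
    exact Multiset.cons_swap _ _ _
  · have e2 : d - k = 1 := by omega
    rw [if_pos hk, if_neg (by omega)]
    simp only [Multiset.sum_singleton, add_zero]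
    rw [e2, Multiset.replicate_one, Multiset.singleton_add]
    rfl
  · rw [if_pos hk, if_pos hdk]
    have hsum : ({k} + {d - k} : Multiset ℕ).sum = d := by
      simp [Multiset.sum_singleton]; omega
    rw [hsum, Nat.sub_self, Multiset.replicate_zero, add_zero, Multiset.singleton_add]
    rfl

theorem fct_filter {d : ℕ} (σ : Perm (Fin d)) :
    (fullCycleType σ).filter (fun x => 2 ≤ x) = σ.cycleType := by
  rw [fullCycleType, Multiset.filter_add,
    Multiset.filter_eq_self.mpr (fun a ha => Perm.two_le_of_mem_cycleType ha),
    Multiset.filter_eq_nil.mpr (fun a ha => by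
      rw [Multiset.eq_of_mem_replicate ha]; omega), add_zero]

theorem fct_sum_le {d : ℕ} (σ : Perm (Fin d)) : σ.cycleType.sum ≤ d := by
  rw [Perm.sum_cycleType]
  simpa using Finset.card_le_univ σ.support

theorem fct_eq_single_iff {d : ℕ} (hd : 2 ≤ d) (σ : Perm (Fin d)) :
    fullCycleType σ = {d} ↔ σ.cycleType = {d} := by
  constructor
  · intro h
    have := congrArg (Multiset.filter (fun x => 2 ≤ x)) h
    rw [fct_filter, Multiset.filter_singleton, if_pos hd] at this
    exact this
  · intro h
    rw [fullCycleType, h, Multiset.sum_singleton, Nat.sub_self, Multiset.replicate_zero, add_zero]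

theorem fct_eq_swap_iff {d : ℕ} (hd : 2 ≤ d) (σ : Perm (Fin d)) :
    fullCycleType σ = {2} + Multiset.replicate (d - 2) 1 ↔ σ.cycleType = {2} := by
  constructor
  · intro h
    have := congrArg (Multiset.filter (fun x => 2 ≤ x)) h
    rw [fct_filter, Multiset.filter_add, Multiset.filter_singleton, if_pos le_rfl,
      Multiset.filter_eq_nil.mpr (fun a ha => by
        rw [Multiset.eq_of_mem_replicate ha]; omega), add_zero] at this
    exact this
  · intro h
    rw [fullCycleType, h, Multiset.sum_singleton]

theorem fct_conj {d : ℕ} (σ g : Perm (Fin d)) :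
    fullCycleType (g * σ * g⁻¹) = fullCycleType σ := by
  rw [fullCycleType, fullCycleType, Perm.cycleType_conj]

theorem fct_inv {d : ℕ} (σ : Perm (Fin d)) : fullCycleType σ⁻¹ = fullCycleType σ := by
  rw [fullCycleType, fullCycleType, Perm.cycleType_inv]

theorem fct_mul_comm {d : ℕ} (σ τ : Perm (Fin d)) :
    fullCycleType (σ * τ) = fullCycleType (τ * σ) := by
  have : τ * σ = σ⁻¹ * (σ * τ) * σ⁻¹⁻¹ := by group
  rw [this, fct_conj]

theorem zpow_trans_of_cycleType {d : ℕ} {σ : Perm (Fin d)} (h : σ.cycleType = {d})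
    (hd : 2 ≤ d) (x y : Fin d) : ∃ n : ℤ, (σ ^ n) x = y := by
  have hc : σ.IsCycle := Perm.card_cycleType_eq_one.mp (by rw [h]; rfl)
  have hs : σ.support = Finset.univ := by
    apply Finset.eq_univ_of_card
    rw [← Perm.sum_cycleType, h, Multiset.sum_singleton, Fintype.card_fin]
  have hx : σ x ≠ x := by
    rw [← Perm.mem_support, hs]; exact Finset.mem_univ x
  have hy : σ y ≠ y := by
    rw [← Perm.mem_support, hs]; exact Finset.mem_univ y
  exact hc.sameCycle hx hy

theorem eq_rotd_pow_of_commute {d : ℕ} (hd : 0 < d) {u : Perm (Fin d)}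
    (h : u * rotd d = rotd d * u) : u = rotd d ^ (u ⟨0, hd⟩).val := by
  have hc : ∀ n : ℕ, u * rotd d ^ n = rotd d ^ n * u := fun n =>
    (Commute.pow_right h n : _)
  refine Equiv.ext fun x => ?_
  have hx : (rotd d ^ x.val) ⟨0, hd⟩ = x := by
    rw [rotd_pow_apply]; exact Fin.ext (by simp [Nat.mod_eq_of_lt x.isLt])
  have h0 : (rotd d ^ (u ⟨0, hd⟩).val) ⟨0, hd⟩ = u ⟨0, hd⟩ := by
    rw [rotd_pow_apply]; exact Fin.ext (by simp [Nat.mod_eq_of_lt (u ⟨0, hd⟩).isLt])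
  calc u x = (u * rotd d ^ x.val) ⟨0, hd⟩ := by rw [Perm.mul_apply, hx]
    _ = (rotd d ^ x.val) (u ⟨0, hd⟩) := by rw [hc]; rfl
    _ = (rotd d ^ x.val) ((rotd d ^ (u ⟨0, hd⟩).val) ⟨0, hd⟩) := by rw [h0]
    _ = (rotd d ^ (u ⟨0, hd⟩).val) ((rotd d ^ x.val) ⟨0, hd⟩) := by
        rw [← Perm.mul_apply, ← Perm.mul_apply, ← pow_add, ← pow_add, Nat.add_comm]
    _ = (rotd d ^ (u ⟨0, hd⟩).val) x := by rw [hx]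

def tperm (d l₁ l₂ : ℕ) : Perm (Fin d) := if l₁ = l₂ then rotd d ^ l₁ else 1

def Hsub (d l₁ l₂ : ℕ) : Subgroup (Perm (Fin d)) := Subgroup.zpowers (tperm d l₁ l₂)

def Epairs (d l₁ l₂ : ℕ) : Type :=
  {p : Perm (Fin d) × Perm (Fin d) //
    p.1.cycleType = {d} ∧ p.2.cycleType = {2} ∧ fullCycleType (p.2 * p.1) = l₁ ::ₘ {l₂}}

section Phi

variable {d l₁ l₂ : ℕ} (h₁ : 1 ≤ l₁) (h₂ : 1 ≤ l₂) (hsum : l₁ + l₂ = d)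

def phi (g : Perm (Fin d)) : Epairs d l₁ l₂ :=
  ⟨(g * rotd d * g⁻¹, Equiv.swap (g ⟨0, by omega⟩) (g ⟨l₁, by omega⟩)), by
    have hne : g ⟨0, by omega⟩ ≠ g ⟨l₁, by omega⟩ := by
      intro e
      have := g.injective e
      have := congrArg Fin.val this
      simp at this; omega
    refine ⟨?_, ?_, ?_⟩
    · rw [Perm.cycleType_conj, cycleType_rotd (by omega)]
    · rw [(Perm.isCycle_swap hne).cycleType, Perm.card_support_swap hne]
    · rw [Equiv.swap_apply_apply,
        show g * Equiv.swap ⟨0, by omega⟩ ⟨l₁, by omega⟩ * g⁻¹ * (g * rotd d * g⁻¹)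
          = g * (Equiv.swap ⟨0, by omega⟩ ⟨l₁, by omega⟩ * rotd d) * g⁻¹ by group,
        fct_conj, fullCycleType_swap_mul_rotd h₁ (show l₁ < d by omega),
        show d - l₁ = l₂ by omega]
      rfl⟩

theorem phi_surjective : Function.Surjective (phi h₁ h₂ hsum) := by
  rintro ⟨⟨c, τ⟩, hc, hτ, hfct⟩
  have hd2 : 2 ≤ d := by omega
  obtain ⟨h, hh⟩ := isConj_iff.mp (Perm.isConj_iff_cycleType_eq.mpr
    (show (rotd d).cycleType = c.cycleType by rw [cycleType_rotd hd2, hc]))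
  obtain ⟨x, y, hxy, hst⟩ := Perm.card_support_eq_two.mp
    (show τ.support.card = 2 by rw [← Perm.sum_cycleType, hτ, Multiset.sum_singleton])
  set a : Fin d := h⁻¹ x with ha
  set g₀ : Perm (Fin d) := h * rotd d ^ a.val with hg₀
  set b₀ : Fin d := (rotd d ^ a.val)⁻¹ (h⁻¹ y) with hb₀
  have hg₀0 : g₀ ⟨0, by omega⟩ = x := by
    rw [hg₀, Perm.mul_apply, rotd_pow_apply]
    have : (⟨(0 + a.val) % d, Nat.mod_lt _ (by omega)⟩ : Fin d) = a :=
      Fin.ext (by simp [Nat.mod_eq_of_lt a.isLt])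
    rw [this, ha, Perm.coe_inv, Equiv.apply_symm_apply]
  have hg₀b : g₀ b₀ = y := by
    rw [hg₀, hb₀, Perm.mul_apply]; simp only [Perm.coe_inv, Equiv.apply_symm_apply]
  have hcg : c = g₀ * rotd d * g₀⁻¹ := by
    rw [hg₀, ← hh]; group
  have hb₀0 : b₀.val ≠ 0 := by
    intro e
    apply hxy
    rw [← hg₀0, ← hg₀b]
    congr 1
    exact (Fin.ext e.symm : (⟨0, by omega⟩ : Fin d) = b₀).symm ▸ rfl
  have key : fullCycleType (Equiv.swap (⟨0, by omega⟩ : Fin d) ⟨b₀.val, b₀.isLt⟩ * rotd d)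
      = l₁ ::ₘ {l₂} := by
    have e1 : (⟨b₀.val, b₀.isLt⟩ : Fin d) = b₀ := Fin.ext rfl
    rw [e1, ← fct_conj _ g₀,
      show g₀ * (Equiv.swap (⟨0, by omega⟩ : Fin d) b₀ * rotd d) * g₀⁻¹
        = (g₀ * Equiv.swap (⟨0, by omega⟩ : Fin d) b₀ * g₀⁻¹) * (g₀ * rotd d * g₀⁻¹) by group,
      ← Equiv.swap_apply_apply, hg₀0, hg₀b, ← hcg, ← hst]
    exact hfct
  rw [fullCycleType_swap_mul_rotd (by omega) b₀.isLt] at key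
  have hmem : b₀.val = l₁ ∨ b₀.val = l₂ := by
    have : b₀.val ∈ ({b₀.val, d - b₀.val} : Multiset ℕ) := Multiset.mem_cons_self _ _
    rw [key] at this
    rcases Multiset.mem_cons.mp this with h' | h'
    · exact Or.inl h'
    · exact Or.inr (Multiset.mem_singleton.mp h')
  rcases hmem with hbv | hbv
  · refine ⟨g₀, ?_⟩
    apply Subtype.ext
    simp only [phi]
    refine Prod.ext ?_ ?_
    · exact hcg.symm
    · show Equiv.swap (g₀ ⟨0, _⟩) (g₀ ⟨l₁, _⟩) = τ
      rw [hg₀0, show (⟨l₁, by omega⟩ : Fin d) = b₀ from Fin.ext hbv.symm, hg₀b, hst]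
  · refine ⟨g₀ * rotd d ^ l₂, ?_⟩
    apply Subtype.ext
    simp only [phi]
    refine Prod.ext ?_ ?_
    · show g₀ * rotd d ^ l₂ * rotd d * (g₀ * rotd d ^ l₂)⁻¹ = c
      rw [hcg]; group
    · show Equiv.swap ((g₀ * rotd d ^ l₂) ⟨0, _⟩) ((g₀ * rotd d ^ l₂) ⟨l₁, _⟩) = τ
      have e1 : (g₀ * rotd d ^ l₂) ⟨0, by omega⟩ = y := by
        rw [Perm.mul_apply, rotd_pow_apply, ← hg₀b]
        congr 1
        exact Fin.ext (by simp [Nat.mod_eq_of_lt (show l₂ < d by omega), hbv])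
      have e2 : (g₀ * rotd d ^ l₂) ⟨l₁, by omega⟩ = x := by
        rw [Perm.mul_apply, rotd_pow_apply]; refine Eq.trans ?_ hg₀0
        congr 1
        exact Fin.ext (by simp [show (l₁ + l₂) % d = 0 by rw [hsum, Nat.mod_self]])
      rw [e1, e2, Equiv.swap_comm, hst]

end Phi

section Ker

variable {d l₁ l₂ : ℕ} (h₁ : 1 ≤ l₁) (h₂ : 1 ≤ l₂) (hsum : l₁ + l₂ = d)

theorem rotd_pow_d {d : ℕ} : rotd d ^ d = 1 := by
  have := List.formPerm_pow_length_eq_one_of_nodup (List.finRange d) (List.nodup_finRange d)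
  simpa [rotd] using this

theorem phi_eq_iff (g g' : Perm (Fin d)) :
    phi h₁ h₂ hsum g = phi h₁ h₂ hsum g' ↔ g⁻¹ * g' ∈ Hsub d l₁ l₂ := by
  have hd2 : 2 ≤ d := by omega
  set z0 : Fin d := ⟨0, by omega⟩ with hz0
  set k₁ : Fin d := ⟨l₁, by omega⟩ with hk₁
  have hz0k : z0 ≠ k₁ := by intro e; have := congrArg Fin.val e; simp [hz0, hk₁] at this; omega
  constructor
  · intro h
    have hpair := Subtype.ext_iff.mp h
    have hfst : g * rotd d * g⁻¹ = g' * rotd d * g'⁻¹ := congrArg Prod.fst hpair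
    have hsnd : Equiv.swap (g z0) (g k₁) = Equiv.swap (g' z0) (g' k₁) :=
      congrArg Prod.snd hpair
    have hcomm : (g⁻¹ * g') * rotd d = rotd d * (g⁻¹ * g') := by
      calc (g⁻¹ * g') * rotd d = g⁻¹ * (g' * rotd d * g'⁻¹) * g' := by group
        _ = g⁻¹ * (g * rotd d * g⁻¹) * g' := by rw [hfst]
        _ = rotd d * (g⁻¹ * g') := by group
    have hu := eq_rotd_pow_of_commute (show 0 < d by omega) hcomm
    by_cases hc0 : g' z0 = g z0
    · have hu0 : (g⁻¹ * g') z0 = z0 := by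
        rw [Perm.mul_apply, hc0, Perm.coe_inv, Equiv.symm_apply_apply]
      rw [hu, hu0]
      have : (z0 : Fin d).val = 0 := rfl
      rw [this, pow_zero]
      exact one_mem _
    · have hc1 : g' z0 = g k₁ := by
        by_contra hc1
        have hfix := Equiv.swap_apply_of_ne_of_ne hc0 hc1
        rw [hsnd, Equiv.swap_apply_left] at hfix
        exact hz0k (g'.injective hfix).symm
      have hgk : g' k₁ = g z0 := by
        have hthis : Equiv.swap (g z0) (g k₁) (g' k₁) = g k₁ := by
          rw [hsnd, Equiv.swap_apply_right, hc1]
        rcases eq_or_ne (g' k₁) (g z0) with e | e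
        · exact e
        rcases eq_or_ne (g' k₁) (g k₁) with e2 | e2
        · rw [e2, Equiv.swap_apply_right] at hthis
          exact absurd (g.injective hthis) hz0k
        · rw [Equiv.swap_apply_of_ne_of_ne e e2] at hthis
          exact absurd hthis e2
      have hu0 : (g⁻¹ * g') z0 = k₁ := by
        rw [Perm.mul_apply, hc1, Perm.coe_inv, Equiv.symm_apply_apply]
      have huk : (g⁻¹ * g') k₁ = z0 := by
        rw [Perm.mul_apply, hgk, Perm.coe_inv, Equiv.symm_apply_apply]
      rw [hu, hu0] at huk ⊢
      have hval : (k₁ : Fin d).val = l₁ := rfl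
      rw [hval] at huk ⊢
      rw [rotd_pow_apply] at huk
      have hmod : (l₁ + l₁) % d = 0 := by
        have := congrArg Fin.val huk
        simpa [hk₁, hz0] using this
      have hdvd : d ∣ l₁ + l₁ := Nat.dvd_of_mod_eq_zero hmod
      have h2l : l₁ + l₁ = d := by
        rcases hdvd with ⟨c, hc⟩
        rcases Nat.lt_or_ge c 2 with hlt | hge
        · interval_cases c <;> omega
        · have : d * 2 ≤ d * c := Nat.mul_le_mul_left d hge
          omega
      have hll : l₁ = l₂ := by omega
      rw [Hsub, tperm, if_pos hll]
      exact Subgroup.mem_zpowers _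
  · intro hm
    obtain ⟨z, hz⟩ := Subgroup.mem_zpowers_iff.mp hm
    have hg' : g' = g * tperm d l₁ l₂ ^ z := by
      rw [hz]; group
    by_cases hll : l₁ = l₂
    · have h2l : l₁ + l₁ = d := by omega
      have ht : tperm d l₁ l₂ = rotd d ^ l₁ := if_pos hll
      have ht2 : tperm d l₁ l₂ ^ (2 : ℤ) = 1 := by
        rw [ht]
        have e : (rotd d ^ l₁) ^ (2:ℤ) = rotd d ^ ((l₁ : ℤ) * 2) := by
          rw [← zpow_natCast, ← zpow_mul]
        rw [e, show ((l₁:ℤ) * 2) = ((d : ℕ) : ℤ) by push_cast; omega, zpow_natCast, rotd_pow_d]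
      have hzmod : tperm d l₁ l₂ ^ z = tperm d l₁ l₂ ^ (z % 2) := by
        conv_lhs => rw [← Int.mul_ediv_add_emod z 2]
        rw [zpow_add, zpow_mul, ht2, one_zpow, one_mul]
      rcases Int.emod_two_eq_zero_or_one z with he | he
      · rw [hg', hzmod, he, zpow_zero, mul_one]
      · rw [hg', hzmod, he, zpow_one]
        apply Subtype.ext
        refine Prod.ext ?_ ?_
        · show g * rotd d * g⁻¹ = g * tperm d l₁ l₂ * rotd d * (g * tperm d l₁ l₂)⁻¹
          rw [ht, ← zpow_natCast]; group
        · show Equiv.swap (g z0) (g k₁) = Equiv.swap ((g * tperm d l₁ l₂) z0)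
            ((g * tperm d l₁ l₂) k₁)
          have e1 : (g * tperm d l₁ l₂) z0 = g k₁ := by
            rw [ht, Perm.mul_apply, rotd_pow_apply]
            congr 1
            exact Fin.ext (by simp [hz0, hk₁, Nat.mod_eq_of_lt (show l₁ < d by omega)])
          have e2 : (g * tperm d l₁ l₂) k₁ = g z0 := by
            rw [ht, Perm.mul_apply, rotd_pow_apply]
            congr 1
            exact Fin.ext (by simp [hz0, hk₁, show (l₁ + l₁) % d = 0 by
              rw [h2l, Nat.mod_self]])
          rw [e1, e2, Equiv.swap_comm]
    · have ht : tperm d l₁ l₂ = 1 := if_neg hll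
      rw [hg', ht, one_zpow, mul_one]

end Ker

section Count

variable {d l₁ l₂ : ℕ}

noncomputable def epairsEquiv (h₁ : 1 ≤ l₁) (h₂ : 1 ≤ l₂) (hsum : l₁ + l₂ = d) : (Perm (Fin d) ⧸ Hsub d l₁ l₂) ≃ Epairs d l₁ l₂ :=
  Equiv.ofBijective
    (fun q => Quotient.liftOn' q (phi h₁ h₂ hsum)
      (fun a b hab => (phi_eq_iff h₁ h₂ hsum a b).mpr (QuotientGroup.leftRel_apply.mp hab)))
    (by
      constructor
      · intro q1 q2
        induction q1 using Quotient.inductionOn'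
        induction q2 using Quotient.inductionOn'
        intro h
        exact Quotient.sound' (QuotientGroup.leftRel_apply.mpr
          ((phi_eq_iff h₁ h₂ hsum _ _).mp h))
      · intro e
        obtain ⟨g, hg⟩ := phi_surjective h₁ h₂ hsum e
        exact ⟨Quotient.mk'' g, hg⟩)

theorem orderOf_tperm (h₁ : 1 ≤ l₁) (h₂ : 1 ≤ l₂) (hsum : l₁ + l₂ = d) : orderOf (tperm d l₁ l₂) = if l₁ = l₂ then 2 else 1 := by
  by_cases hll : l₁ = l₂
  · rw [if_pos hll, tperm, if_pos hll]
    apply orderOf_eq_prime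
    · rw [← pow_mul, show l₁ * 2 = d by omega, rotd_pow_d]
    · intro e
      have h0 : (rotd d ^ l₁) (⟨0, by omega⟩ : Fin d) = ⟨0, by omega⟩ := by rw [e]; rfl
      rw [rotd_pow_apply] at h0
      have := congrArg Fin.val h0
      simp [Nat.mod_eq_of_lt (show l₁ < d by omega)] at this
      omega
  · rw [if_neg hll, tperm, if_neg hll, orderOf_one]

theorem card_epairs (h₁ : 1 ≤ l₁) (h₂ : 1 ≤ l₂) (hsum : l₁ + l₂ = d) :
    Nat.card (Epairs d l₁ l₂) * (if l₁ = l₂ then 2 else 1) = d.factorial := by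
  have hG : Nat.card (Perm (Fin d)) = d.factorial := by
    rw [Nat.card_eq_fintype_card, Fintype.card_perm, Fintype.card_fin]
  have hH : Nat.card (Hsub d l₁ l₂) = if l₁ = l₂ then 2 else 1 := by
    rw [Hsub, Nat.card_zpowers, orderOf_tperm h₁ h₂ hsum]
  have hQ := Subgroup.card_eq_card_quotient_mul_card_subgroup (Hsub d l₁ l₂)
  rw [hG, hH] at hQ
  rw [← Nat.card_congr (epairsEquiv h₁ h₂ hsum), hQ]

end Count

section Tuple

variable {d l₁ l₂ : ℕ}

noncomputable def tupleEquiv (h₁ : 1 ≤ l₁) (h₂ : 1 ≤ l₂) (hsum : l₁ + l₂ = d) :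
    {σ : Fin 3 → Perm (Fin d) //
      (∀ i, fullCycleType (σ i) =
        ![ (l₁ ::ₘ {l₂} : Multiset ℕ), ({d} : Multiset ℕ),
           (({2} : Multiset ℕ) + Multiset.replicate (d - 2) 1) ] i) ∧
      (List.ofFn σ).prod = 1 ∧ IsTransitiveTuple σ} ≃ Epairs d l₁ l₂ where
  toFun s := ⟨(s.1 1, s.1 2), by
    obtain ⟨hμ, hp, -⟩ := s.2
    have hprod : s.1 0 * (s.1 1 * s.1 2) = 1 := by
      simpa [List.ofFn_succ] using hp
    refine ⟨?_, ?_, ?_⟩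
    · exact (fct_eq_single_iff (by omega) _).mp (hμ 1)
    · exact (fct_eq_swap_iff (by omega) _).mp (hμ 2)
    · have h0' : (s.1 1 * s.1 2)⁻¹ = s.1 0 := inv_eq_of_mul_eq_one_left hprod
      have hx := hμ 0
      rw [← h0', fct_inv, fct_mul_comm] at hx
      exact hx⟩
  invFun p := ⟨![(p.1.1 * p.1.2)⁻¹, p.1.1, p.1.2], by
    refine ⟨?_, ?_, ?_⟩
    · intro i
      fin_cases i
      · show fullCycleType ((p.1.1 * p.1.2)⁻¹) = l₁ ::ₘ {l₂}
        rw [fct_inv, fct_mul_comm]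
        exact p.2.2.2
      · exact (fct_eq_single_iff (by omega) _).mpr p.2.1
      · exact (fct_eq_swap_iff (by omega) _).mpr p.2.2.1
    · show (List.ofFn ![(p.1.1 * p.1.2)⁻¹, p.1.1, p.1.2]).prod = 1
      simp [List.ofFn_succ, mul_assoc]
    · intro x y
      obtain ⟨n, hn⟩ := zpow_trans_of_cycleType p.2.1 (by omega) x y
      exact ⟨p.1.1 ^ n,
        Subgroup.zpow_mem _ (Subgroup.subset_closure (Set.mem_range_self 1)) n, hn⟩⟩
  left_inv s := by
    apply Subtype.ext
    funext i
    obtain ⟨hμ, hp, -⟩ := s.2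
    have hprod : s.1 0 * (s.1 1 * s.1 2) = 1 := by
      simpa [List.ofFn_succ] using hp
    fin_cases i
    · show (s.1 1 * s.1 2)⁻¹ = s.1 0
      exact inv_eq_of_mul_eq_one_left hprod
    · rfl
    · rfl
  right_inv p := by
    apply Subtype.ext
    rfl

end Tuple


/-- If `μ(p₁) = (λ₁, λ₂)`, `μ(p₂) = (d)` and `μ(p₃) = (2,1,…,1)`, then
`H^d_{S²}(P, μ) = 1/|Aut(μ(p₁))|`, where `|Aut(μ(p₁))| = 2` if `λ₁ = λ₂` and `1` otherwise. -/
theorem hurwitz_three_points (d l₁ l₂ : ℕ) (h₁ : 1 ≤ l₁) (h₂ : 1 ≤ l₂)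
    (hsum : l₁ + l₂ = d) :
    sphereHurwitz d 3
      ![ (l₁ ::ₘ {l₂} : Multiset ℕ), ({d} : Multiset ℕ),
         (({2} : Multiset ℕ) + Multiset.replicate (d - 2) 1) ]
      = 1 / (if l₁ = l₂ then 2 else 1) := by
  rw [sphereHurwitz, Nat.card_congr (tupleEquiv h₁ h₂ hsum)]
  have hcard := card_epairs h₁ h₂ hsum
  have hfac : (0:ℚ) < (d.factorial : ℚ) := by
    exact_mod_cast Nat.factorial_pos d
  rw [div_eq_div_iff hfac.ne' (by split_ifs <;> norm_num :
    (if l₁ = l₂ then (2:ℚ) else 1) ≠ 0), one_mul]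
  split_ifs with hll
  · rw [if_pos hll] at hcard
    exact_mod_cast hcard
  · rw [if_neg hll] at hcard
    exact_mod_cast hcard
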